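/- MASC RCU bound: Let (X₁,X₂) be a pair of random variables with joint distribution P_{X₁X₂} on countable alphabets 𝒳₁ × 𝒳₂, and let M₁, M₂ be positive integers. Then there exists an (M₁,M₂,ε) MASC with ε ≤ E[ min{ 1, A₁ + A₂ + A₁₂ } ], where A₁ := (1/M₁)·|{ x̄₁ ∈ 𝒳₁ : P_{X₁|X₂}(x̄₁|X₂) ≥ P_{X₁|X₂}(X₁|X₂) }|, A₂ := (1/M₂)·|{ x̄₂ ∈ 𝒳₂ : P_{X₂|X₁}(x̄₂|X₁) ≥ P_{X₂|X₁}(X₂|X₁) }|, and A₁₂ := (1/(M₁·M₂))·|{ (x̄₁,x̄₂) ∈ 𝒳₁×𝒳₂ : P_{X₁X₂}(x̄₁,x̄₂) ≥ P_{X₁X₂}(X₁,X₂) }|. -/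

import Mathlib

open Function

private def pairEquiv {ι β : Type*} [DecidableEq ι] {i j : ι} (h : i ≠ j) :
    {g : ι → β // g i = g j} × β ≃ (ι → β) where
  toFun p := Function.update p.1.1 j p.2
  invFun g := (⟨Function.update g j (g i), by
      simp [Function.update_of_ne h]⟩, g j)
  left_inv := by
    rintro ⟨⟨g, hg⟩, v⟩
    simp [Function.update_of_ne h, Function.update_idem, ← hg]
  right_inv := by
    intro g
    simp [Function.update_of_ne h, Function.update_idem]

private def subtypeFstEquiv {A B : Type*} (p : A → Prop) :
    {ω : A × B // p ω.1} ≃ {a // p a} × B :=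
  ⟨fun ω => (⟨ω.1.1, ω.2⟩, ω.1.2), fun q => ⟨(q.1.1, q.2), q.1.2⟩,
    fun _ => rfl, fun _ => rfl⟩

private def subtypeSndEquiv {A B : Type*} (q : B → Prop) :
    {ω : A × B // q ω.2} ≃ A × {b // q b} :=
  ⟨fun ω => (ω.1.1, ⟨ω.1.2, ω.2⟩), fun q => ⟨(q.1, q.2.1), q.2.2⟩,
    fun _ => rfl, fun _ => rfl⟩

private lemma card_pair {ι β : Type*} [DecidableEq ι] {i j : ι} (h : i ≠ j) :
    Nat.card {g : ι → β // g i = g j} * Nat.card β = Nat.card (ι → β) := by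
  rw [← Nat.card_prod]
  exact Nat.card_congr (pairEquiv h)

section count
variable {ι κ : Type*} [DecidableEq ι] [DecidableEq κ] {M₁ M₂ : ℕ}

private lemma card_coll1 {i j : ι} (h : i ≠ j) :
    Nat.card {ω : (ι → Fin M₁) × (κ → Fin M₂) // ω.1 i = ω.1 j} * M₁
      = Nat.card ((ι → Fin M₁) × (κ → Fin M₂)) := by
  have e : {ω : (ι → Fin M₁) × (κ → Fin M₂) // ω.1 i = ω.1 j}
      ≃ {g : ι → Fin M₁ // g i = g j} × (κ → Fin M₂) := subtypeFstEquiv (A := ι → Fin M₁) (B := κ → Fin M₂) (fun g => g i = g j)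
  rw [Nat.card_congr e, Nat.card_prod, Nat.card_prod, mul_right_comm]
  have := card_pair (β := Fin M₁) h
  rw [Nat.card_eq_fintype_card (α := Fin M₁), Fintype.card_fin] at this
  rw [this]

private lemma card_coll2 {k l : κ} (h : k ≠ l) :
    Nat.card {ω : (ι → Fin M₁) × (κ → Fin M₂) // ω.2 k = ω.2 l} * M₂
      = Nat.card ((ι → Fin M₁) × (κ → Fin M₂)) := by
  have e : {ω : (ι → Fin M₁) × (κ → Fin M₂) // ω.2 k = ω.2 l}
      ≃ (ι → Fin M₁) × {g : κ → Fin M₂ // g k = g l} := subtypeSndEquiv (A := ι → Fin M₁) (B := κ → Fin M₂) (fun g => g k = g l)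
  rw [Nat.card_congr e, Nat.card_prod, Nat.card_prod, mul_assoc]
  have := card_pair (β := Fin M₂) h
  rw [Nat.card_eq_fintype_card (α := Fin M₂), Fintype.card_fin] at this
  rw [this]

private lemma card_coll12 {i j : ι} (hij : i ≠ j) {k l : κ} (hkl : k ≠ l) :
    Nat.card {ω : (ι → Fin M₁) × (κ → Fin M₂) // ω.1 i = ω.1 j ∧ ω.2 k = ω.2 l}
        * (M₁ * M₂)
      = Nat.card ((ι → Fin M₁) × (κ → Fin M₂)) := by
  have e : {ω : (ι → Fin M₁) × (κ → Fin M₂) // ω.1 i = ω.1 j ∧ ω.2 k = ω.2 l}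
      ≃ {g : ι → Fin M₁ // g i = g j} × {g : κ → Fin M₂ // g k = g l} :=
    Equiv.subtypeProdEquivProd
      (p := fun g : ι → Fin M₁ => g i = g j) (q := fun g : κ → Fin M₂ => g k = g l)
  rw [Nat.card_congr e, Nat.card_prod, Nat.card_prod, mul_mul_mul_comm]
  have h1 := card_pair (β := Fin M₁) hij
  have h2 := card_pair (β := Fin M₂) hkl
  rw [Nat.card_eq_fintype_card (α := Fin M₁), Fintype.card_fin] at h1
  rw [Nat.card_eq_fintype_card (α := Fin M₂), Fintype.card_fin] at h2
  rw [h1, h2]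

end count

open Finset in
private lemma count_bound {ι κ : Type*} [Fintype ι] [DecidableEq ι] [Fintype κ]
    [DecidableEq κ] {M₁ M₂ : ℕ} (hM₁ : 0 < M₁) (hM₂ : 0 < M₂) (i₀ : ι) (k₀ : κ)
    (s₁ : Finset ι) (hs₁ : ∀ a ∈ s₁, a ≠ i₀) (s₂ : Finset κ) (hs₂ : ∀ b ∈ s₂, b ≠ k₀)
    (s₃ : Finset (ι × κ)) (hs₃ : ∀ y ∈ s₃, y.1 ≠ i₀ ∧ y.2 ≠ k₀) :
    ((Finset.univ.filter (fun σ : (ι → Fin M₁) × (κ → Fin M₂) =>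
        (∃ a ∈ s₁, σ.1 a = σ.1 i₀) ∨ (∃ b ∈ s₂, σ.2 b = σ.2 k₀) ∨
          (∃ y ∈ s₃, σ.1 y.1 = σ.1 i₀ ∧ σ.2 y.2 = σ.2 k₀))).card : ℝ)
      ≤ (Fintype.card ((ι → Fin M₁) × (κ → Fin M₂)) : ℝ) *
          ((s₁.card : ℝ) / M₁ + (s₂.card : ℝ) / M₂ + (s₃.card : ℝ) / (M₁ * M₂)) := by
  classical
  set N : ℕ := Fintype.card ((ι → Fin M₁) × (κ → Fin M₂)) with hN
  -- single collision counts
  have key1 : ∀ a ∈ s₁,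
      ((univ.filter (fun σ : (ι → Fin M₁) × (κ → Fin M₂) => σ.1 a = σ.1 i₀)).card : ℝ)
        = N / M₁ := by
    intro a ha
    have h := card_coll1 (κ := κ) (M₁ := M₁) (M₂ := M₂) (hs₁ a ha)
    rw [Nat.card_eq_fintype_card, Nat.card_eq_fintype_card, Fintype.card_subtype] at h
    rw [eq_div_iff (by exact_mod_cast hM₁.ne' : (M₁ : ℝ) ≠ 0)]
    exact_mod_cast h
  have key2 : ∀ b ∈ s₂,
      ((univ.filter (fun σ : (ι → Fin M₁) × (κ → Fin M₂) => σ.2 b = σ.2 k₀)).card : ℝ)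
        = N / M₂ := by
    intro b hb
    have h := card_coll2 (ι := ι) (M₁ := M₁) (M₂ := M₂) (hs₂ b hb)
    rw [Nat.card_eq_fintype_card, Nat.card_eq_fintype_card, Fintype.card_subtype] at h
    rw [eq_div_iff (by exact_mod_cast hM₂.ne' : (M₂ : ℝ) ≠ 0)]
    exact_mod_cast h
  have key3 : ∀ y ∈ s₃,
      ((univ.filter (fun σ : (ι → Fin M₁) × (κ → Fin M₂) =>
          σ.1 y.1 = σ.1 i₀ ∧ σ.2 y.2 = σ.2 k₀)).card : ℝ) = N / (M₁ * M₂) := by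
    intro y hy
    have h := card_coll12 (hs₃ y hy).1 (hs₃ y hy).2 (M₁ := M₁) (M₂ := M₂)
    rw [Nat.card_eq_fintype_card, Nat.card_eq_fintype_card, Fintype.card_subtype] at h
    have hMM : ((M₁ : ℝ) * M₂) ≠ 0 := by positivity
    rw [eq_div_iff hMM]
    exact_mod_cast h
  -- union bound
  have split : (univ.filter (fun σ : (ι → Fin M₁) × (κ → Fin M₂) =>
        (∃ a ∈ s₁, σ.1 a = σ.1 i₀) ∨ (∃ b ∈ s₂, σ.2 b = σ.2 k₀) ∨
          (∃ y ∈ s₃, σ.1 y.1 = σ.1 i₀ ∧ σ.2 y.2 = σ.2 k₀))).card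
      ≤ (univ.filter (fun σ : (ι → Fin M₁) × (κ → Fin M₂) =>
          (∃ a ∈ s₁, σ.1 a = σ.1 i₀))).card
        + (univ.filter (fun σ : (ι → Fin M₁) × (κ → Fin M₂) =>
          (∃ b ∈ s₂, σ.2 b = σ.2 k₀))).card
        + (univ.filter (fun σ : (ι → Fin M₁) × (κ → Fin M₂) =>
          (∃ y ∈ s₃, σ.1 y.1 = σ.1 i₀ ∧ σ.2 y.2 = σ.2 k₀))).card := by
    rw [filter_or, filter_or]
    refine (card_union_le _ _).trans ?_
    rw [add_assoc]
    exact Nat.add_le_add_left (card_union_le _ _) _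
  have u1 : ((univ.filter (fun σ : (ι → Fin M₁) × (κ → Fin M₂) =>
        (∃ a ∈ s₁, σ.1 a = σ.1 i₀))).card : ℝ) ≤ s₁.card * (N / M₁) := by
    have hsub : (univ.filter (fun σ : (ι → Fin M₁) × (κ → Fin M₂) =>
        (∃ a ∈ s₁, σ.1 a = σ.1 i₀)))
        ⊆ s₁.biUnion (fun a => univ.filter (fun σ => σ.1 a = σ.1 i₀)) := by
      intro σ hσ
      simp only [mem_filter, mem_univ, true_and] at hσ
      obtain ⟨a, ha, hcoll⟩ := hσ
      exact mem_biUnion.2 ⟨a, ha, by simp [hcoll]⟩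
    calc ((univ.filter _).card : ℝ)
        ≤ ((s₁.biUnion (fun a => univ.filter (fun σ : (ι → Fin M₁) × (κ → Fin M₂) => σ.1 a = σ.1 i₀))).card : ℝ) := by
          exact_mod_cast card_le_card hsub
      _ ≤ ∑ a ∈ s₁, ((univ.filter (fun σ : (ι → Fin M₁) × (κ → Fin M₂) =>
            σ.1 a = σ.1 i₀)).card : ℝ) := by exact_mod_cast card_biUnion_le
      _ = ∑ a ∈ s₁, (N / M₁ : ℝ) := Finset.sum_congr rfl key1
      _ = s₁.card * (N / M₁) := by rw [Finset.sum_const, nsmul_eq_mul]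
  have u2 : ((univ.filter (fun σ : (ι → Fin M₁) × (κ → Fin M₂) =>
        (∃ b ∈ s₂, σ.2 b = σ.2 k₀))).card : ℝ) ≤ s₂.card * (N / M₂) := by
    have hsub : (univ.filter (fun σ : (ι → Fin M₁) × (κ → Fin M₂) =>
        (∃ b ∈ s₂, σ.2 b = σ.2 k₀)))
        ⊆ s₂.biUnion (fun b => univ.filter (fun σ => σ.2 b = σ.2 k₀)) := by
      intro σ hσ
      simp only [mem_filter, mem_univ, true_and] at hσ
      obtain ⟨b, hb, hcoll⟩ := hσ
      exact mem_biUnion.2 ⟨b, hb, by simp [hcoll]⟩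
    calc ((univ.filter _).card : ℝ)
        ≤ ((s₂.biUnion (fun b => univ.filter (fun σ : (ι → Fin M₁) × (κ → Fin M₂) => σ.2 b = σ.2 k₀))).card : ℝ) := by
          exact_mod_cast card_le_card hsub
      _ ≤ ∑ b ∈ s₂, ((univ.filter (fun σ : (ι → Fin M₁) × (κ → Fin M₂) =>
            σ.2 b = σ.2 k₀)).card : ℝ) := by exact_mod_cast card_biUnion_le
      _ = ∑ b ∈ s₂, (N / M₂ : ℝ) := Finset.sum_congr rfl key2
      _ = s₂.card * (N / M₂) := by rw [Finset.sum_const, nsmul_eq_mul]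
  have u3 : ((univ.filter (fun σ : (ι → Fin M₁) × (κ → Fin M₂) =>
        (∃ y ∈ s₃, σ.1 y.1 = σ.1 i₀ ∧ σ.2 y.2 = σ.2 k₀))).card : ℝ)
        ≤ s₃.card * (N / (M₁ * M₂)) := by
    have hsub : (univ.filter (fun σ : (ι → Fin M₁) × (κ → Fin M₂) =>
        (∃ y ∈ s₃, σ.1 y.1 = σ.1 i₀ ∧ σ.2 y.2 = σ.2 k₀)))
        ⊆ s₃.biUnion (fun y => univ.filter (fun σ => σ.1 y.1 = σ.1 i₀ ∧ σ.2 y.2 = σ.2 k₀)) := by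
      intro σ hσ
      simp only [mem_filter, mem_univ, true_and] at hσ
      obtain ⟨y, hy, hcoll⟩ := hσ
      exact mem_biUnion.2 ⟨y, hy, by simp [hcoll.1, hcoll.2]⟩
    calc ((univ.filter _).card : ℝ)
        ≤ ((s₃.biUnion (fun y => univ.filter (fun σ : (ι → Fin M₁) × (κ → Fin M₂) =>
            σ.1 y.1 = σ.1 i₀ ∧ σ.2 y.2 = σ.2 k₀))).card : ℝ) := by
          exact_mod_cast card_le_card hsub
      _ ≤ ∑ y ∈ s₃, ((univ.filter (fun σ : (ι → Fin M₁) × (κ → Fin M₂) =>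
            σ.1 y.1 = σ.1 i₀ ∧ σ.2 y.2 = σ.2 k₀)).card : ℝ) := by
          exact_mod_cast card_biUnion_le
      _ = ∑ y ∈ s₃, (N / (M₁ * M₂) : ℝ) := Finset.sum_congr rfl key3
      _ = s₃.card * (N / (M₁ * M₂)) := by rw [Finset.sum_const, nsmul_eq_mul]
  have : ((univ.filter (fun σ : (ι → Fin M₁) × (κ → Fin M₂) =>
        (∃ a ∈ s₁, σ.1 a = σ.1 i₀) ∨ (∃ b ∈ s₂, σ.2 b = σ.2 k₀) ∨
          (∃ y ∈ s₃, σ.1 y.1 = σ.1 i₀ ∧ σ.2 y.2 = σ.2 k₀))).card : ℝ)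
      ≤ s₁.card * (N / M₁) + s₂.card * (N / M₂) + s₃.card * (N / (M₁ * M₂)) := by
    have split' : ((univ.filter (fun σ : (ι → Fin M₁) × (κ → Fin M₂) =>
        (∃ a ∈ s₁, σ.1 a = σ.1 i₀) ∨ (∃ b ∈ s₂, σ.2 b = σ.2 k₀) ∨
          (∃ y ∈ s₃, σ.1 y.1 = σ.1 i₀ ∧ σ.2 y.2 = σ.2 k₀))).card : ℝ)
        ≤ ((univ.filter (fun σ : (ι → Fin M₁) × (κ → Fin M₂) =>
            (∃ a ∈ s₁, σ.1 a = σ.1 i₀))).card : ℝ)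
          + ((univ.filter (fun σ : (ι → Fin M₁) × (κ → Fin M₂) =>
            (∃ b ∈ s₂, σ.2 b = σ.2 k₀))).card : ℝ)
          + ((univ.filter (fun σ : (ι → Fin M₁) × (κ → Fin M₂) =>
            (∃ y ∈ s₃, σ.1 y.1 = σ.1 i₀ ∧ σ.2 y.2 = σ.2 k₀))).card : ℝ) := by
      exact_mod_cast split
    exact split'.trans (add_le_add (add_le_add u1 u2) u3)
  refine this.trans (le_of_eq ?_)
  ring

private lemma finite_ge_of_summable {α : Type*} {f : α → ℝ} (hf : Summable f) {c : ℝ}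
    (hc : 0 < c) : {y | c ≤ f y}.Finite := by
  have h : f ⁻¹' Set.Iio c ∈ Filter.cofinite := hf.tendsto_cofinite_zero (Iio_mem_nhds hc)
  rw [Filter.mem_cofinite] at h
  refine h.subset fun y hy => ?_
  simpa [not_lt] using hy

private def compPred {𝒳₁ 𝒳₂ : Type*} {M₁ M₂ : ℕ} (P : 𝒳₁ × 𝒳₂ → ℝ) (x : 𝒳₁ × 𝒳₂)
    (f : (𝒳₁ → Fin M₁) × (𝒳₂ → Fin M₂)) : Prop :=
  (∃ a, (a ≠ x.1 ∧ P x ≤ P (a, x.2)) ∧ f.1 a = f.1 x.1) ∨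
  (∃ b, (b ≠ x.2 ∧ P x ≤ P (x.1, b)) ∧ f.2 b = f.2 x.2) ∨
  (∃ y : 𝒳₁ × 𝒳₂, (y.1 ≠ x.1 ∧ y.2 ≠ x.2 ∧ P x ≤ P y) ∧
    f.1 y.1 = f.1 x.1 ∧ f.2 y.2 = f.2 x.2)

open Classical in
private noncomputable def errF {𝒳₁ 𝒳₂ : Type*} {M₁ M₂ : ℕ} (P : 𝒳₁ × 𝒳₂ → ℝ)
    (x : 𝒳₁ × 𝒳₂) (f : (𝒳₁ → Fin M₁) × (𝒳₂ → Fin M₂)) : ℝ :=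
  if compPred P x f then P x else 0

private lemma errF_nonneg {𝒳₁ 𝒳₂ : Type*} {M₁ M₂ : ℕ} {P : 𝒳₁ × 𝒳₂ → ℝ}
    (hP0 : ∀ x, 0 ≤ P x) (x : 𝒳₁ × 𝒳₂) (f : (𝒳₁ → Fin M₁) × (𝒳₂ → Fin M₂)) :
    0 ≤ errF P x f := by
  unfold errF; split
  · exact hP0 x
  · exact le_rfl

private lemma errF_le {𝒳₁ 𝒳₂ : Type*} {M₁ M₂ : ℕ} {P : 𝒳₁ × 𝒳₂ → ℝ}
    (hP0 : ∀ x, 0 ≤ P x) (x : 𝒳₁ × 𝒳₂) (f : (𝒳₁ → Fin M₁) × (𝒳₂ → Fin M₂)) :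
    errF P x f ≤ P x := by
  unfold errF; split
  · exact le_rfl
  · exact hP0 x

/-- **MASC RCU bound.**
For a pair `(X₁,X₂)` with joint distribution `P` on countable alphabets and positive
integers `M₁, M₂`, there exists an `(M₁,M₂,ε)` MASC whose error probability is at most
`E[min{1, A₁ + A₂ + A₁₂}]`, where, writing `P_{X₁|X₂}(a|b) = P(a,b)/P₂(b)` etc.,
`A₁ = (1/M₁)·|{x̄₁ : P_{X₁|X₂}(x̄₁|X₂) ≥ P_{X₁|X₂}(X₁|X₂)}|`,
`A₂ = (1/M₂)·|{x̄₂ : P_{X₂|X₁}(x̄₂|X₁) ≥ P_{X₂|X₁}(X₂|X₁)}|`, and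
`A₁₂ = (1/(M₁M₂))·|{(x̄₁,x̄₂) : P(x̄₁,x̄₂) ≥ P(X₁,X₂)}|`. -/
theorem masc_rcu_bound {𝒳₁ 𝒳₂ : Type*} [Countable 𝒳₁] [Countable 𝒳₂]
    [DecidableEq 𝒳₁] [DecidableEq 𝒳₂]
    (P : 𝒳₁ × 𝒳₂ → ℝ) (hP0 : ∀ x, 0 ≤ P x) (hPsum : ∑' x, P x = 1)
    (P1 : 𝒳₁ → ℝ) (hP1 : ∀ a, P1 a = ∑' b, P (a, b))
    (P2 : 𝒳₂ → ℝ) (hP2 : ∀ b, P2 b = ∑' a, P (a, b))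
    (M₁ M₂ : ℕ) (hM₁ : 0 < M₁) (hM₂ : 0 < M₂) :
    ∃ f₁ : 𝒳₁ → Fin M₁, ∃ f₂ : 𝒳₂ → Fin M₂,
      ∃ g : Fin M₁ × Fin M₂ → 𝒳₁ × 𝒳₂,
        (∑' x : 𝒳₁ × 𝒳₂, if g (f₁ x.1, f₂ x.2) = x then (0 : ℝ) else P x)
          ≤ ∑' x : 𝒳₁ × 𝒳₂, P x *
              min 1
                ((1 / (M₁ : ℝ)) *
                    ({a : 𝒳₁ | P x / P2 x.2 ≤ P (a, x.2) / P2 x.2}.ncard : ℝ)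
                  + (1 / (M₂ : ℝ)) *
                    ({b : 𝒳₂ | P x / P1 x.1 ≤ P (x.1, b) / P1 x.1}.ncard : ℝ)
                  + (1 / ((M₁ : ℝ) * (M₂ : ℝ))) *
                    ({y : 𝒳₁ × 𝒳₂ | P x ≤ P y}.ncard : ℝ)) := by
  classical
  set B : ℝ := ∑' x : 𝒳₁ × 𝒳₂, P x *
      min 1
        ((1 / (M₁ : ℝ)) * ({a : 𝒳₁ | P x / P2 x.2 ≤ P (a, x.2) / P2 x.2}.ncard : ℝ)
          + (1 / (M₂ : ℝ)) * ({b : 𝒳₂ | P x / P1 x.1 ≤ P (x.1, b) / P1 x.1}.ncard : ℝ)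
          + (1 / ((M₁ : ℝ) * (M₂ : ℝ))) * ({y : 𝒳₁ × 𝒳₂ | P x ≤ P y}.ncard : ℝ)) with hBdef
  -- Basic summability facts
  have hPsummable : Summable P := by
    by_contra h
    rw [tsum_eq_zero_of_not_summable h] at hPsum
    norm_num at hPsum
  have hrow : ∀ a : 𝒳₁, Summable (fun b => P (a, b)) := by
    intro a
    exact hPsummable.comp_injective (fun b b' h => by simpa using h)
  have hcol : ∀ b : 𝒳₂, Summable (fun a => P (a, b)) := by
    intro b
    exact hPsummable.comp_injective (fun a a' h => by simpa using h)
  have hP1pos : ∀ x : 𝒳₁ × 𝒳₂, 0 < P x → 0 < P1 x.1 := by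
    intro x hx
    rw [hP1]
    refine lt_of_lt_of_le hx ?_
    have := Summable.le_tsum (hrow x.1) x.2 (fun j _ => hP0 _)
    simpa using this
  have hP2pos : ∀ x : 𝒳₁ × 𝒳₂, 0 < P x → 0 < P2 x.2 := by
    intro x hx
    rw [hP2]
    refine lt_of_lt_of_le hx ?_
    have := Summable.le_tsum (hcol x.2) x.1 (fun j _ => hP0 _)
    simpa using this
  -- finiteness of competitor sets
  have hfinC₁ : ∀ x : 𝒳₁ × 𝒳₂, 0 < P x → {a | a ≠ x.1 ∧ P x ≤ P (a, x.2)}.Finite :=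
    fun x hx => (finite_ge_of_summable (hcol x.2) hx).subset (fun a ha => ha.2)
  have hfinC₂ : ∀ x : 𝒳₁ × 𝒳₂, 0 < P x → {b | b ≠ x.2 ∧ P x ≤ P (x.1, b)}.Finite :=
    fun x hx => (finite_ge_of_summable (hrow x.1) hx).subset (fun b hb => hb.2)
  have hfinC₃ : ∀ x : 𝒳₁ × 𝒳₂, 0 < P x →
      {y : 𝒳₁ × 𝒳₂ | y.1 ≠ x.1 ∧ y.2 ≠ x.2 ∧ P x ≤ P y}.Finite :=
    fun x hx => (finite_ge_of_summable hPsummable hx).subset (fun y hy => hy.2.2)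
  -- nonnegativity facts on the RHS integrand
  have hrhs0 : ∀ x : 𝒳₁ × 𝒳₂, 0 ≤ P x *
      min 1
        ((1 / (M₁ : ℝ)) * ({a : 𝒳₁ | P x / P2 x.2 ≤ P (a, x.2) / P2 x.2}.ncard : ℝ)
          + (1 / (M₂ : ℝ)) * ({b : 𝒳₂ | P x / P1 x.1 ≤ P (x.1, b) / P1 x.1}.ncard : ℝ)
          + (1 / ((M₁ : ℝ) * (M₂ : ℝ))) * ({y : 𝒳₁ × 𝒳₂ | P x ≤ P y}.ncard : ℝ)) := by
    intro x
    refine mul_nonneg (hP0 x) (le_min (by norm_num) (by positivity))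
  have hrhssummable : Summable (fun x : 𝒳₁ × 𝒳₂ => P x *
      min 1
        ((1 / (M₁ : ℝ)) * ({a : 𝒳₁ | P x / P2 x.2 ≤ P (a, x.2) / P2 x.2}.ncard : ℝ)
          + (1 / (M₂ : ℝ)) * ({b : 𝒳₂ | P x / P1 x.1 ≤ P (x.1, b) / P1 x.1}.ncard : ℝ)
          + (1 / ((M₁ : ℝ) * (M₂ : ℝ))) * ({y : 𝒳₁ × 𝒳₂ | P x ≤ P y}.ncard : ℝ))) :=
    Summable.of_nonneg_of_le hrhs0
      (fun x => mul_le_of_le_one_right (hP0 x) (min_le_left _ _)) hPsummable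
  have hB0 : 0 ≤ B := hBdef ▸ tsum_nonneg hrhs0
  -- Step B : there is an encoder pair whose (comparison-decoder) error is at most B
  have stepB : ∃ f : (𝒳₁ → Fin M₁) × (𝒳₂ → Fin M₂),
      ∀ u : Finset (𝒳₁ × 𝒳₂), ∑ x ∈ u, errF P x f ≤ B := by
    -- clopen-ness of the competitor events
    have hclopen : ∀ x : 𝒳₁ × 𝒳₂, 0 < P x →
        IsClopen {f : (𝒳₁ → Fin M₁) × (𝒳₂ → Fin M₂) | compPred P x f} := by
      intro x hx
      have hc1 : ∀ a : 𝒳₁,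
          IsClopen {f : (𝒳₁ → Fin M₁) × (𝒳₂ → Fin M₂) | f.1 a = f.1 x.1} := by
        intro a
        have : {f : (𝒳₁ → Fin M₁) × (𝒳₂ → Fin M₂) | f.1 a = f.1 x.1} =
            (fun f : (𝒳₁ → Fin M₁) × (𝒳₂ → Fin M₂) => (f.1 a, f.1 x.1)) ⁻¹'
              {p : Fin M₁ × Fin M₁ | p.1 = p.2} := rfl
        rw [this]
        exact (isClopen_discrete _).preimage
          (((continuous_apply a).comp continuous_fst).prodMk
            ((continuous_apply x.1).comp continuous_fst))
      have hc2 : ∀ b : 𝒳₂,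
          IsClopen {f : (𝒳₁ → Fin M₁) × (𝒳₂ → Fin M₂) | f.2 b = f.2 x.2} := by
        intro b
        have : {f : (𝒳₁ → Fin M₁) × (𝒳₂ → Fin M₂) | f.2 b = f.2 x.2} =
            (fun f : (𝒳₁ → Fin M₁) × (𝒳₂ → Fin M₂) => (f.2 b, f.2 x.2)) ⁻¹'
              {p : Fin M₂ × Fin M₂ | p.1 = p.2} := rfl
        rw [this]
        exact (isClopen_discrete _).preimage
          (((continuous_apply b).comp continuous_snd).prodMk
            ((continuous_apply x.2).comp continuous_snd))
      have e1 : {f : (𝒳₁ → Fin M₁) × (𝒳₂ → Fin M₂) |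
            ∃ a, (a ≠ x.1 ∧ P x ≤ P (a, x.2)) ∧ f.1 a = f.1 x.1}
          = ⋃ a ∈ {a : 𝒳₁ | a ≠ x.1 ∧ P x ≤ P (a, x.2)},
              {f : (𝒳₁ → Fin M₁) × (𝒳₂ → Fin M₂) | f.1 a = f.1 x.1} := by
        ext f
        simp [Set.mem_iUnion]
      have e2 : {f : (𝒳₁ → Fin M₁) × (𝒳₂ → Fin M₂) |
            ∃ b, (b ≠ x.2 ∧ P x ≤ P (x.1, b)) ∧ f.2 b = f.2 x.2}
          = ⋃ b ∈ {b : 𝒳₂ | b ≠ x.2 ∧ P x ≤ P (x.1, b)},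
              {f : (𝒳₁ → Fin M₁) × (𝒳₂ → Fin M₂) | f.2 b = f.2 x.2} := by
        ext f
        simp [Set.mem_iUnion]
      have e3 : {f : (𝒳₁ → Fin M₁) × (𝒳₂ → Fin M₂) |
            ∃ y : 𝒳₁ × 𝒳₂, (y.1 ≠ x.1 ∧ y.2 ≠ x.2 ∧ P x ≤ P y) ∧
              f.1 y.1 = f.1 x.1 ∧ f.2 y.2 = f.2 x.2}
          = ⋃ y ∈ {y : 𝒳₁ × 𝒳₂ | y.1 ≠ x.1 ∧ y.2 ≠ x.2 ∧ P x ≤ P y},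
              ({f : (𝒳₁ → Fin M₁) × (𝒳₂ → Fin M₂) | f.1 y.1 = f.1 x.1} ∩
                {f : (𝒳₁ → Fin M₁) × (𝒳₂ → Fin M₂) | f.2 y.2 = f.2 x.2}) := by
        ext f
        simp only [Set.mem_setOf_eq, Set.mem_iUnion, Set.mem_inter_iff, Prod.exists,
          exists_prop]
      have : {f : (𝒳₁ → Fin M₁) × (𝒳₂ → Fin M₂) | compPred P x f} =
          {f : (𝒳₁ → Fin M₁) × (𝒳₂ → Fin M₂) |
            ∃ a, (a ≠ x.1 ∧ P x ≤ P (a, x.2)) ∧ f.1 a = f.1 x.1} ∪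
          ({f : (𝒳₁ → Fin M₁) × (𝒳₂ → Fin M₂) |
            ∃ b, (b ≠ x.2 ∧ P x ≤ P (x.1, b)) ∧ f.2 b = f.2 x.2} ∪
          {f : (𝒳₁ → Fin M₁) × (𝒳₂ → Fin M₂) |
            ∃ y : 𝒳₁ × 𝒳₂, (y.1 ≠ x.1 ∧ y.2 ≠ x.2 ∧ P x ≤ P y) ∧
              f.1 y.1 = f.1 x.1 ∧ f.2 y.2 = f.2 x.2}) := by
        ext f
        rfl
      rw [this, e1, e2, e3]
      refine IsClopen.union ?_ (IsClopen.union ?_ ?_)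
      · exact Set.Finite.isClopen_biUnion (hfinC₁ x hx) (fun a _ => hc1 a)
      · exact Set.Finite.isClopen_biUnion (hfinC₂ x hx) (fun b _ => hc2 b)
      · exact Set.Finite.isClopen_biUnion (hfinC₃ x hx)
          (fun y _ => (hc1 y.1).inter (hc2 y.2))
    -- the family of closed constraint sets
    set K : Finset (𝒳₁ × 𝒳₂) → Set ((𝒳₁ → Fin M₁) × (𝒳₂ → Fin M₂)) := fun F =>
      {f | ∑ x ∈ F.filter (fun x => 0 < P x), errF P x f ≤ B} with hKdef
    have hKclosed : ∀ F, IsClosed (K F) := by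
      intro F
      have hcont : Continuous (fun f : (𝒳₁ → Fin M₁) × (𝒳₂ → Fin M₂) =>
          ∑ x ∈ F.filter (fun x => 0 < P x), errF P x f) := by
        refine continuous_finset_sum _ (fun x hxF => ?_)
        have hx : 0 < P x := (Finset.mem_filter.1 hxF).2
        unfold errF
        refine Continuous.if (fun a ha => ?_) continuous_const continuous_const
        rw [(hclopen x hx).frontier_eq] at ha
        exact absurd ha (Set.notMem_empty _)
      exact IsClosed.preimage hcont isClosed_Iic
    have hKnonempty : ∀ F, (K F).Nonempty := by
      intro F
      set F' : Finset (𝒳₁ × 𝒳₂) := F.filter (fun x => 0 < P x) with hF'def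
      have hF'pos : ∀ x ∈ F', 0 < P x := fun x hx => (Finset.mem_filter.1 hx).2
      -- competitor finsets
      set T₁ : 𝒳₁ × 𝒳₂ → Finset 𝒳₁ := fun x =>
        if h : 0 < P x then (hfinC₁ x h).toFinset else ∅ with hT₁def
      set T₂ : 𝒳₁ × 𝒳₂ → Finset 𝒳₂ := fun x =>
        if h : 0 < P x then (hfinC₂ x h).toFinset else ∅ with hT₂def
      set T₃ : 𝒳₁ × 𝒳₂ → Finset (𝒳₁ × 𝒳₂) := fun x =>
        if h : 0 < P x then (hfinC₃ x h).toFinset else ∅ with hT₃def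
      have hT₁mem : ∀ x : 𝒳₁ × 𝒳₂, 0 < P x → ∀ a : 𝒳₁,
          (a ∈ T₁ x ↔ (a ≠ x.1 ∧ P x ≤ P (a, x.2))) := by
        intro x hx a
        rw [hT₁def]
        simp only [dif_pos hx]
        exact (hfinC₁ x hx).mem_toFinset
      have hT₂mem : ∀ x : 𝒳₁ × 𝒳₂, 0 < P x → ∀ b : 𝒳₂,
          (b ∈ T₂ x ↔ (b ≠ x.2 ∧ P x ≤ P (x.1, b))) := by
        intro x hx b
        rw [hT₂def]
        simp only [dif_pos hx]
        exact (hfinC₂ x hx).mem_toFinset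
      have hT₃mem : ∀ x : 𝒳₁ × 𝒳₂, 0 < P x → ∀ y : 𝒳₁ × 𝒳₂,
          (y ∈ T₃ x ↔ (y.1 ≠ x.1 ∧ y.2 ≠ x.2 ∧ P x ≤ P y)) := by
        intro x hx y
        rw [hT₃def]
        simp only [dif_pos hx]
        exact (hfinC₃ x hx).mem_toFinset
      -- relevant coordinate sets
      set R₁ : Finset 𝒳₁ :=
        F'.biUnion (fun x => insert x.1 (T₁ x ∪ (T₃ x).image Prod.fst)) with hR₁def
      set R₂ : Finset 𝒳₂ :=
        F'.biUnion (fun x => insert x.2 (T₂ x ∪ (T₃ x).image Prod.snd)) with hR₂def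
      have hx1R : ∀ x ∈ F', x.1 ∈ R₁ := fun x hx =>
        Finset.mem_biUnion.2 ⟨x, hx, Finset.mem_insert_self _ _⟩
      have hx2R : ∀ x ∈ F', x.2 ∈ R₂ := fun x hx =>
        Finset.mem_biUnion.2 ⟨x, hx, Finset.mem_insert_self _ _⟩
      have hT₁R : ∀ x ∈ F', ∀ a ∈ T₁ x, a ∈ R₁ := fun x hx a ha =>
        Finset.mem_biUnion.2 ⟨x, hx,
          Finset.mem_insert_of_mem (Finset.mem_union_left _ ha)⟩
      have hT₂R : ∀ x ∈ F', ∀ b ∈ T₂ x, b ∈ R₂ := fun x hx b hb =>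
        Finset.mem_biUnion.2 ⟨x, hx,
          Finset.mem_insert_of_mem (Finset.mem_union_left _ hb)⟩
      have hT₃R1 : ∀ x ∈ F', ∀ y ∈ T₃ x, y.1 ∈ R₁ := fun x hx y hy =>
        Finset.mem_biUnion.2 ⟨x, hx, Finset.mem_insert_of_mem
          (Finset.mem_union_right _ (Finset.mem_image_of_mem Prod.fst hy))⟩
      have hT₃R2 : ∀ x ∈ F', ∀ y ∈ T₃ x, y.2 ∈ R₂ := fun x hx y hy =>
        Finset.mem_biUnion.2 ⟨x, hx, Finset.mem_insert_of_mem
          (Finset.mem_union_right _ (Finset.mem_image_of_mem Prod.snd hy))⟩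
      -- the finite seed space and the extension map
      set emb : ({a // a ∈ R₁} → Fin M₁) × ({b // b ∈ R₂} → Fin M₂) →
          (𝒳₁ → Fin M₁) × (𝒳₂ → Fin M₂) := fun σ =>
        (fun a => if h : a ∈ R₁ then σ.1 ⟨a, h⟩ else ⟨0, hM₁⟩,
          fun b => if h : b ∈ R₂ then σ.2 ⟨b, h⟩ else ⟨0, hM₂⟩) with hembdef
      set N : ℕ :=
        Fintype.card (({a // a ∈ R₁} → Fin M₁) × ({b // b ∈ R₂} → Fin M₂)) with hNdef
      -- per-point expected error bound
      have hperx : ∀ x ∈ F',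
          ∑ σ : ({a // a ∈ R₁} → Fin M₁) × ({b // b ∈ R₂} → Fin M₂),
            errF P x (emb σ)
          ≤ (N : ℝ) * (P x *
              min 1
                ((1 / (M₁ : ℝ)) *
                    ({a : 𝒳₁ | P x / P2 x.2 ≤ P (a, x.2) / P2 x.2}.ncard : ℝ)
                  + (1 / (M₂ : ℝ)) *
                    ({b : 𝒳₂ | P x / P1 x.1 ≤ P (x.1, b) / P1 x.1}.ncard : ℝ)
                  + (1 / ((M₁ : ℝ) * (M₂ : ℝ))) *
                    ({y : 𝒳₁ × 𝒳₂ | P x ≤ P y}.ncard : ℝ))) := by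
        intro x hxF'
        have hx : 0 < P x := hF'pos x hxF'
        have hx1 : x.1 ∈ R₁ := hx1R x hxF'
        have hx2 : x.2 ∈ R₂ := hx2R x hxF'
        have hM₁' : (0 : ℝ) < M₁ := by exact_mod_cast hM₁
        have hM₂' : (0 : ℝ) < M₂ := by exact_mod_cast hM₂
        set i₀ : {a // a ∈ R₁} := ⟨x.1, hx1⟩ with hi₀def
        set k₀ : {b // b ∈ R₂} := ⟨x.2, hx2⟩ with hk₀def
        set s₁ : Finset {a // a ∈ R₁} :=
          R₁.attach.filter (fun a => (a : 𝒳₁) ∈ T₁ x) with hs₁def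
        set s₂ : Finset {b // b ∈ R₂} :=
          R₂.attach.filter (fun b => (b : 𝒳₂) ∈ T₂ x) with hs₂def
        set s₃ : Finset ({a // a ∈ R₁} × {b // b ∈ R₂}) :=
          (R₁.attach ×ˢ R₂.attach).filter
            (fun y => ((y.1 : 𝒳₁), (y.2 : 𝒳₂)) ∈ T₃ x) with hs₃def
        have hemb1 : ∀ σ : ({a // a ∈ R₁} → Fin M₁) × ({b // b ∈ R₂} → Fin M₂),
            ∀ (a : 𝒳₁) (h : a ∈ R₁), (emb σ).1 a = σ.1 ⟨a, h⟩ := by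
          intro σ a h
          simp only [hembdef]
          exact dif_pos h
        have hemb2 : ∀ σ : ({a // a ∈ R₁} → Fin M₁) × ({b // b ∈ R₂} → Fin M₂),
            ∀ (b : 𝒳₂) (h : b ∈ R₂), (emb σ).2 b = σ.2 ⟨b, h⟩ := by
          intro σ b h
          simp only [hembdef]
          exact dif_pos h
        have hiff : ∀ σ : ({a // a ∈ R₁} → Fin M₁) × ({b // b ∈ R₂} → Fin M₂),
            compPred P x (emb σ) ↔
            ((∃ a ∈ s₁, σ.1 a = σ.1 i₀) ∨ (∃ b ∈ s₂, σ.2 b = σ.2 k₀) ∨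
              (∃ y ∈ s₃, σ.1 y.1 = σ.1 i₀ ∧ σ.2 y.2 = σ.2 k₀)) := by
          intro σ
          constructor
          · rintro (⟨a, hmem, hcoll⟩ | ⟨b, hmem, hcoll⟩ | ⟨y, hmem, hcoll1, hcoll2⟩)
            · have haT : a ∈ T₁ x := (hT₁mem x hx a).2 hmem
              have haR : a ∈ R₁ := hT₁R x hxF' a haT
              refine Or.inl ⟨⟨a, haR⟩,
                Finset.mem_filter.2 ⟨Finset.mem_attach _ _, haT⟩, ?_⟩
              rw [← hemb1 σ a haR, ← hemb1 σ x.1 hx1]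
              exact hcoll
            · have hbT : b ∈ T₂ x := (hT₂mem x hx b).2 hmem
              have hbR : b ∈ R₂ := hT₂R x hxF' b hbT
              refine Or.inr (Or.inl ⟨⟨b, hbR⟩,
                Finset.mem_filter.2 ⟨Finset.mem_attach _ _, hbT⟩, ?_⟩)
              rw [← hemb2 σ b hbR, ← hemb2 σ x.2 hx2]
              exact hcoll
            · have hyT : y ∈ T₃ x := (hT₃mem x hx y).2 hmem
              have hyR1 : y.1 ∈ R₁ := hT₃R1 x hxF' y hyT
              have hyR2 : y.2 ∈ R₂ := hT₃R2 x hxF' y hyT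
              refine Or.inr (Or.inr ⟨(⟨y.1, hyR1⟩, ⟨y.2, hyR2⟩),
                Finset.mem_filter.2 ⟨Finset.mem_product.2
                  ⟨Finset.mem_attach _ _, Finset.mem_attach _ _⟩, by simpa using hyT⟩,
                ?_, ?_⟩)
              · rw [← hemb1 σ y.1 hyR1, ← hemb1 σ x.1 hx1]
                exact hcoll1
              · rw [← hemb2 σ y.2 hyR2, ← hemb2 σ x.2 hx2]
                exact hcoll2
          · rintro (⟨a, ha, hcoll⟩ | ⟨b, hb, hcoll⟩ | ⟨y, hy, hcoll1, hcoll2⟩)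
            · have hprop := (hT₁mem x hx _).1 (Finset.mem_filter.1 ha).2
              refine Or.inl ⟨(a : 𝒳₁), hprop, ?_⟩
              rw [hemb1 σ (a : 𝒳₁) a.2, hemb1 σ x.1 hx1]
              exact hcoll
            · have hprop := (hT₂mem x hx _).1 (Finset.mem_filter.1 hb).2
              refine Or.inr (Or.inl ⟨(b : 𝒳₂), hprop, ?_⟩)
              rw [hemb2 σ (b : 𝒳₂) b.2, hemb2 σ x.2 hx2]
              exact hcoll
            · have hprop := (hT₃mem x hx _).1 (Finset.mem_filter.1 hy).2
              refine Or.inr (Or.inr ⟨((y.1 : 𝒳₁), (y.2 : 𝒳₂)), hprop, ?_, ?_⟩)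
              · rw [hemb1 σ _ y.1.2, hemb1 σ x.1 hx1]
                exact hcoll1
              · rw [hemb2 σ _ y.2.2, hemb2 σ x.2 hx2]
                exact hcoll2
        have hsum : ∑ σ : ({a // a ∈ R₁} → Fin M₁) × ({b // b ∈ R₂} → Fin M₂),
            errF P x (emb σ)
            = ((Finset.univ.filter
                (fun σ : ({a // a ∈ R₁} → Fin M₁) × ({b // b ∈ R₂} → Fin M₂) =>
                  compPred P x (emb σ))).card : ℝ) * P x := by
          unfold errF
          rw [← Finset.sum_filter, Finset.sum_const, nsmul_eq_mul]
        have hfe : Finset.univ.filter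
              (fun σ : ({a // a ∈ R₁} → Fin M₁) × ({b // b ∈ R₂} → Fin M₂) =>
                compPred P x (emb σ))
            = Finset.univ.filter
              (fun σ : ({a // a ∈ R₁} → Fin M₁) × ({b // b ∈ R₂} → Fin M₂) =>
                (∃ a ∈ s₁, σ.1 a = σ.1 i₀) ∨ (∃ b ∈ s₂, σ.2 b = σ.2 k₀) ∨
                  (∃ y ∈ s₃, σ.1 y.1 = σ.1 i₀ ∧ σ.2 y.2 = σ.2 k₀)) :=
          Finset.filter_congr (fun σ _ => hiff σ)
        -- cardinality comparisons with the sets in the statement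
        have hP2x : 0 < P2 x.2 := hP2pos x hx
        have hP1x : 0 < P1 x.1 := hP1pos x hx
        have hSeq₁ : {a : 𝒳₁ | P x / P2 x.2 ≤ P (a, x.2) / P2 x.2}
            = {a : 𝒳₁ | P x ≤ P (a, x.2)} := by
          ext a
          exact div_le_div_iff_of_pos_right hP2x
        have hSeq₂ : {b : 𝒳₂ | P x / P1 x.1 ≤ P (x.1, b) / P1 x.1}
            = {b : 𝒳₂ | P x ≤ P (x.1, b)} := by
          ext b
          exact div_le_div_iff_of_pos_right hP1x
        have hSfin₁ : {a : 𝒳₁ | P x ≤ P (a, x.2)}.Finite :=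
          finite_ge_of_summable (hcol x.2) hx
        have hSfin₂ : {b : 𝒳₂ | P x ≤ P (x.1, b)}.Finite :=
          finite_ge_of_summable (hrow x.1) hx
        have hSfin₃ : {y : 𝒳₁ × 𝒳₂ | P x ≤ P y}.Finite :=
          finite_ge_of_summable hPsummable hx
        have hn₁ : (s₁.card : ℝ) ≤
            ({a : 𝒳₁ | P x / P2 x.2 ≤ P (a, x.2) / P2 x.2}.ncard : ℝ) := by
          rw [hSeq₁, Set.ncard_eq_toFinset_card _ hSfin₁]
          have h := Finset.card_le_card_of_injOn (s := s₁) (t := hSfin₁.toFinset)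
            (fun a : {a // a ∈ R₁} => (a : 𝒳₁))
            (fun a ha => hSfin₁.mem_toFinset.2
              ((hT₁mem x hx _).1 (Finset.mem_filter.1 ha).2).2)
            (fun a _ b _ h => Subtype.ext h)
          exact_mod_cast h
        have hn₂ : (s₂.card : ℝ) ≤
            ({b : 𝒳₂ | P x / P1 x.1 ≤ P (x.1, b) / P1 x.1}.ncard : ℝ) := by
          rw [hSeq₂, Set.ncard_eq_toFinset_card _ hSfin₂]
          have h := Finset.card_le_card_of_injOn (s := s₂) (t := hSfin₂.toFinset)
            (fun b : {b // b ∈ R₂} => (b : 𝒳₂))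
            (fun b hb => hSfin₂.mem_toFinset.2
              ((hT₂mem x hx _).1 (Finset.mem_filter.1 hb).2).2)
            (fun a _ b _ h => Subtype.ext h)
          exact_mod_cast h
        have hn₃ : (s₃.card : ℝ) ≤ ({y : 𝒳₁ × 𝒳₂ | P x ≤ P y}.ncard : ℝ) := by
          rw [Set.ncard_eq_toFinset_card _ hSfin₃]
          have h := Finset.card_le_card_of_injOn (s := s₃) (t := hSfin₃.toFinset)
            (fun y : {a // a ∈ R₁} × {b // b ∈ R₂} => ((y.1 : 𝒳₁), (y.2 : 𝒳₂)))
            (fun y hy => hSfin₃.mem_toFinset.2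
              ((hT₃mem x hx _).1 (Finset.mem_filter.1 hy).2).2.2)
            (fun y _ z _ h => Prod.ext (Subtype.ext (congrArg Prod.fst h))
              (Subtype.ext (congrArg Prod.snd h)))
          exact_mod_cast h
        have hs₁ne : ∀ a ∈ s₁, a ≠ i₀ := by
          intro a ha h
          exact ((hT₁mem x hx _).1 (Finset.mem_filter.1 ha).2).1
            (congrArg Subtype.val h)
        have hs₂ne : ∀ b ∈ s₂, b ≠ k₀ := by
          intro b hb h
          exact ((hT₂mem x hx _).1 (Finset.mem_filter.1 hb).2).1
            (congrArg Subtype.val h)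
        have hs₃ne : ∀ y ∈ s₃, y.1 ≠ i₀ ∧ y.2 ≠ k₀ := by
          intro y hy
          have hp := (hT₃mem x hx _).1 (Finset.mem_filter.1 hy).2
          exact ⟨fun h => hp.1 (congrArg Subtype.val h),
            fun h => hp.2.1 (congrArg Subtype.val h)⟩
        have hcount : ((Finset.univ.filter
              (fun σ : ({a // a ∈ R₁} → Fin M₁) × ({b // b ∈ R₂} → Fin M₂) =>
                compPred P x (emb σ))).card : ℝ)
            ≤ (N : ℝ) *
              min 1
                ((1 / (M₁ : ℝ)) *
                    ({a : 𝒳₁ | P x / P2 x.2 ≤ P (a, x.2) / P2 x.2}.ncard : ℝ)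
                  + (1 / (M₂ : ℝ)) *
                    ({b : 𝒳₂ | P x / P1 x.1 ≤ P (x.1, b) / P1 x.1}.ncard : ℝ)
                  + (1 / ((M₁ : ℝ) * (M₂ : ℝ))) *
                    ({y : 𝒳₁ × 𝒳₂ | P x ≤ P y}.ncard : ℝ)) := by
          rw [mul_min_of_nonneg _ _ (Nat.cast_nonneg N)]
          refine le_min ?_ ?_
          · rw [mul_one]
            have h := (Finset.card_filter_le Finset.univ
              (fun σ : ({a // a ∈ R₁} → Fin M₁) × ({b // b ∈ R₂} → Fin M₂) =>
                compPred P x (emb σ))).trans_eq Finset.card_univ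
            exact_mod_cast h
          · rw [hfe]
            refine (count_bound hM₁ hM₂ i₀ k₀ s₁ hs₁ne s₂ hs₂ne s₃ hs₃ne).trans ?_
            refine mul_le_mul_of_nonneg_left ?_ (Nat.cast_nonneg _)
            rw [one_div_mul_eq_div, one_div_mul_eq_div, one_div_mul_eq_div]
            gcongr
        calc ∑ σ : ({a // a ∈ R₁} → Fin M₁) × ({b // b ∈ R₂} → Fin M₂),
              errF P x (emb σ)
            = ((Finset.univ.filter
                (fun σ : ({a // a ∈ R₁} → Fin M₁) × ({b // b ∈ R₂} → Fin M₂) =>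
                  compPred P x (emb σ))).card : ℝ) * P x := hsum
          _ ≤ ((N : ℝ) *
              min 1
                ((1 / (M₁ : ℝ)) *
                    ({a : 𝒳₁ | P x / P2 x.2 ≤ P (a, x.2) / P2 x.2}.ncard : ℝ)
                  + (1 / (M₂ : ℝ)) *
                    ({b : 𝒳₂ | P x / P1 x.1 ≤ P (x.1, b) / P1 x.1}.ncard : ℝ)
                  + (1 / ((M₁ : ℝ) * (M₂ : ℝ))) *
                    ({y : 𝒳₁ × 𝒳₂ | P x ≤ P y}.ncard : ℝ))) * P x :=
            mul_le_mul_of_nonneg_right hcount (hP0 x)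
          _ = _ := by ring
      -- total expected error bound
      have htot : ∑ σ : ({a // a ∈ R₁} → Fin M₁) × ({b // b ∈ R₂} → Fin M₂),
          ∑ x ∈ F', errF P x (emb σ) ≤ (N : ℝ) * B := by
        rw [Finset.sum_comm]
        calc ∑ x ∈ F', ∑ σ : ({a // a ∈ R₁} → Fin M₁) × ({b // b ∈ R₂} → Fin M₂),
              errF P x (emb σ)
            ≤ ∑ x ∈ F', (N : ℝ) * (P x *
                min 1
                  ((1 / (M₁ : ℝ)) *
                      ({a : 𝒳₁ | P x / P2 x.2 ≤ P (a, x.2) / P2 x.2}.ncard : ℝ)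
                    + (1 / (M₂ : ℝ)) *
                      ({b : 𝒳₂ | P x / P1 x.1 ≤ P (x.1, b) / P1 x.1}.ncard : ℝ)
                    + (1 / ((M₁ : ℝ) * (M₂ : ℝ))) *
                      ({y : 𝒳₁ × 𝒳₂ | P x ≤ P y}.ncard : ℝ))) :=
            Finset.sum_le_sum hperx
          _ = (N : ℝ) * ∑ x ∈ F', (P x *
                min 1
                  ((1 / (M₁ : ℝ)) *
                      ({a : 𝒳₁ | P x / P2 x.2 ≤ P (a, x.2) / P2 x.2}.ncard : ℝ)
                    + (1 / (M₂ : ℝ)) *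
                      ({b : 𝒳₂ | P x / P1 x.1 ≤ P (x.1, b) / P1 x.1}.ncard : ℝ)
                    + (1 / ((M₁ : ℝ) * (M₂ : ℝ))) *
                      ({y : 𝒳₁ × 𝒳₂ | P x ≤ P y}.ncard : ℝ))) := by
            rw [Finset.mul_sum]
          _ ≤ (N : ℝ) * B := by
            refine mul_le_mul_of_nonneg_left ?_ (Nat.cast_nonneg _)
            rw [hBdef]
            exact Summable.sum_le_tsum F' (fun x _ => hrhs0 x) hrhssummable
      -- extract a good seed
      have hgood : ∃ σ : ({a // a ∈ R₁} → Fin M₁) × ({b // b ∈ R₂} → Fin M₂),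
          ∑ x ∈ F', errF P x (emb σ) ≤ B := by
        by_contra hcon
        push_neg at hcon
        have hNe : Nonempty (({a // a ∈ R₁} → Fin M₁) × ({b // b ∈ R₂} → Fin M₂)) :=
          ⟨(fun _ => ⟨0, hM₁⟩, fun _ => ⟨0, hM₂⟩)⟩
        have h1 : (N : ℝ) * B <
            ∑ σ : ({a // a ∈ R₁} → Fin M₁) × ({b // b ∈ R₂} → Fin M₂),
              ∑ x ∈ F', errF P x (emb σ) := by
          calc (N : ℝ) * B
              = ∑ _σ : ({a // a ∈ R₁} → Fin M₁) × ({b // b ∈ R₂} → Fin M₂), B := by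
                rw [Finset.sum_const, Finset.card_univ, nsmul_eq_mul, hNdef]
            _ < _ := Finset.sum_lt_sum_of_nonempty Finset.univ_nonempty
                (fun σ _ => hcon σ)
        exact absurd htot (not_le.2 h1)
      obtain ⟨σ, hσ⟩ := hgood
      exact ⟨emb σ, hσ⟩
    have hKdirected : Directed (· ⊇ ·) K := by
      intro F G
      refine ⟨F ∪ G, fun f hf => ?_, fun f hf => ?_⟩
      · refine le_trans (Finset.sum_le_sum_of_subset_of_nonneg
          (Finset.filter_subset_filter _ Finset.subset_union_left)
          (fun x _ _ => errF_nonneg hP0 x f)) hf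
      · refine le_trans (Finset.sum_le_sum_of_subset_of_nonneg
          (Finset.filter_subset_filter _ Finset.subset_union_right)
          (fun x _ _ => errF_nonneg hP0 x f)) hf
    obtain ⟨f, hfmem⟩ :=
      IsCompact.nonempty_iInter_of_directed_nonempty_isCompact_isClosed K hKdirected
        hKnonempty (fun F => (hKclosed F).isCompact) hKclosed
    refine ⟨f, fun u => ?_⟩
    have hu : f ∈ K u := Set.mem_iInter.1 hfmem u
    have hsplit : ∑ x ∈ u.filter (fun x => 0 < P x), errF P x f = ∑ x ∈ u, errF P x f := by
      refine Finset.sum_filter_of_ne (fun x hxu hne => ?_)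
      by_contra hpos
      have hPx : P x = 0 := le_antisymm (not_lt.1 hpos) (hP0 x)
      refine hne ?_
      unfold errF
      split
      · exact hPx
      · rfl
    rw [← hsplit]
    exact hu
  obtain ⟨f, hf⟩ := stepB
  have herrsummable : Summable (fun x => errF P x f) :=
    summable_of_sum_le (fun x => errF_nonneg hP0 x f) hf
  have herrB : ∑' x, errF P x f ≤ B := Summable.tsum_le_of_sum_le herrsummable hf
  -- Step A : construct a decoder
  have stepA : ∃ g : Fin M₁ × Fin M₂ → 𝒳₁ × 𝒳₂,
      ∀ x : 𝒳₁ × 𝒳₂, (if g (f.1 x.1, f.2 x.2) = x then (0 : ℝ) else P x) ≤ errF P x f := by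
    have hne : Nonempty (𝒳₁ × 𝒳₂) := by
      by_contra h
      rw [not_nonempty_iff] at h
      rw [tsum_empty] at hPsum
      norm_num at hPsum
    obtain ⟨x₀⟩ := hne
    set gfun : Fin M₁ × Fin M₂ → 𝒳₁ × 𝒳₂ := fun m =>
      if h : ∃ y : 𝒳₁ × 𝒳₂, (f.1 y.1, f.2 y.2) = m ∧
          (∀ z : 𝒳₁ × 𝒳₂, (f.1 z.1, f.2 z.2) = m → P z ≤ P y) then h.choose else x₀
      with hgdef
    refine ⟨gfun, fun x => ?_⟩
    by_cases hgx : gfun (f.1 x.1, f.2 x.2) = x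
    · rw [if_pos hgx]
      exact errF_nonneg hP0 x f
    · rw [if_neg hgx]
      by_cases hx : 0 < P x
      · suffices hc : compPred P x f by
          unfold errF
          rw [if_pos hc]
        have hTfin : {y : 𝒳₁ × 𝒳₂ | P x ≤ P y ∧
            (f.1 y.1, f.2 y.2) = (f.1 x.1, f.2 x.2)}.Finite :=
          (finite_ge_of_summable hPsummable hx).subset (fun y hy => hy.1)
        have hxT : x ∈ hTfin.toFinset := hTfin.mem_toFinset.2 ⟨le_rfl, rfl⟩
        obtain ⟨y, hyT, hymax⟩ := Finset.exists_max_image hTfin.toFinset P ⟨x, hxT⟩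
        rw [hTfin.mem_toFinset] at hyT
        have hbin : ∃ y : 𝒳₁ × 𝒳₂, (f.1 y.1, f.2 y.2) = (f.1 x.1, f.2 x.2) ∧
            ∀ z : 𝒳₁ × 𝒳₂, (f.1 z.1, f.2 z.2) = (f.1 x.1, f.2 x.2) → P z ≤ P y := by
          refine ⟨y, hyT.2, fun z hz => ?_⟩
          by_cases hzx : P x ≤ P z
          · exact hymax z (hTfin.mem_toFinset.2 ⟨hzx, hz⟩)
          · exact (not_le.1 hzx).le.trans hyT.1
        have hgval : gfun (f.1 x.1, f.2 x.2) = hbin.choose := by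
          rw [hgdef]
          exact dif_pos hbin
        obtain ⟨hybin, hymax'⟩ := hbin.choose_spec
        have hPxy : P x ≤ P hbin.choose := hymax' x rfl
        have hyne : hbin.choose ≠ x := by
          rw [← hgval]
          exact hgx
        rw [Prod.mk.injEq] at hybin
        by_cases h1 : hbin.choose.1 = x.1
        · by_cases h2 : hbin.choose.2 = x.2
          · exact absurd (Prod.ext h1 h2) hyne
          · refine Or.inr (Or.inl ⟨hbin.choose.2, ⟨h2, ?_⟩, hybin.2⟩)
            have he : (x.1, hbin.choose.2) = hbin.choose := Prod.ext h1.symm rfl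
            rw [he]
            exact hPxy
        · by_cases h2 : hbin.choose.2 = x.2
          · refine Or.inl ⟨hbin.choose.1, ⟨h1, ?_⟩, hybin.1⟩
            have he : (hbin.choose.1, x.2) = hbin.choose := Prod.ext rfl h2.symm
            rw [he]
            exact hPxy
          · exact Or.inr (Or.inr ⟨hbin.choose, ⟨h1, h2, hPxy⟩, hybin.1, hybin.2⟩)
      · have hPx : P x = 0 := le_antisymm (not_lt.1 hx) (hP0 x)
        rw [hPx]
        exact errF_nonneg hP0 x f
  obtain ⟨g, hg⟩ := stepA
  refine ⟨f.1, f.2, g, ?_⟩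
  have hLHSsummable : Summable (fun x : 𝒳₁ × 𝒳₂ =>
      if g (f.1 x.1, f.2 x.2) = x then (0 : ℝ) else P x) := by
    refine Summable.of_nonneg_of_le (fun x => ?_) (fun x => ?_) hPsummable
    · split
      · exact le_rfl
      · exact hP0 x
    · split
      · exact hP0 x
      · exact le_rfl
  calc (∑' x : 𝒳₁ × 𝒳₂, if g (f.1 x.1, f.2 x.2) = x then (0 : ℝ) else P x)
      ≤ ∑' x, errF P x f := Summable.tsum_le_tsum hg hLHSsummable herrsummable
    _ ≤ B := herrB
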